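/- Let g : ℤ → ℝ satisfy g(x) > 0 for all x and suppose lim_{n→∞} (1/n) ∑_{x=0}^{n−1} g(x) = 1. Let F : ℝ → [0,1] be a continuous nondecreasing function. Then for every M > 0, lim_{t→∞} (1/√t) ∑_{0 ≤ x ≤ M√t} g(x)·F(−x/√t) = ∫_0^M F(−s) ds. -/

import Mathlib

open Finset Filter MeasureTheory intervalIntegral
open Finset Filter MeasureTheory intervalIntegral

lemma sum_Icc_int_eq (h : ℤ → ℝ) (m : ℕ) :
    ∑ x ∈ Finset.Icc (0 : ℤ) (m : ℤ), h x = ∑ i ∈ Finset.range (m + 1), h (i : ℤ) := by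
  rw [Int.Icc_eq_finset_map, Finset.sum_map]
  have : ((m : ℤ) + 1 - 0).toNat = m + 1 := by omega
  rw [this]
  refine Finset.sum_congr rfl fun i _ => ?_
  simp [Nat.castEmbedding, addLeftEmbedding]

lemma abel_bound (c f : ℕ → ℝ) (n : ℕ) (hf : Antitone f) (hf0 : ∀ i, 0 ≤ f i)
    (hf1 : f 0 ≤ 1) {B : ℝ}
    (hB : ∀ k ≤ n, |∑ i ∈ Finset.range k, c i| ≤ B) :
    |∑ i ∈ Finset.range n, c i * f i| ≤ B := by
  have hB0 : 0 ≤ B := by simpa using hB 0 (Nat.zero_le n)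
  rcases Nat.eq_zero_or_pos n with hn | hn
  · simpa [hn] using hB0
  have key := Finset.sum_range_by_parts f c n
  simp only [smul_eq_mul] at key
  have hcomm : (∑ i ∈ Finset.range n, c i * f i) = ∑ i ∈ Finset.range n, f i * c i :=
    Finset.sum_congr rfl fun i _ => mul_comm _ _
  rw [hcomm, key]
  have hT : |∑ i ∈ Finset.range (n - 1), (f (i + 1) - f i) * ∑ j ∈ Finset.range (i + 1), c j|
      ≤ (f 0 - f (n - 1)) * B := by
    calc |∑ i ∈ Finset.range (n - 1), (f (i + 1) - f i) * ∑ j ∈ Finset.range (i + 1), c j|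
        ≤ ∑ i ∈ Finset.range (n - 1), |(f (i + 1) - f i) * ∑ j ∈ Finset.range (i + 1), c j| :=
          Finset.abs_sum_le_sum_abs _ _
      _ ≤ ∑ i ∈ Finset.range (n - 1), (f i - f (i + 1)) * B := by
          refine Finset.sum_le_sum fun i hi => ?_
          rw [abs_mul, abs_sub_comm, abs_of_nonneg (by linarith [hf (Nat.le_succ i)] : (0:ℝ) ≤ f i - f (i+1))]
          have hi' : i + 1 ≤ n := by have := Finset.mem_range.mp hi; omega
          exact mul_le_mul_of_nonneg_left (hB (i+1) hi') (by linarith [hf (Nat.le_succ i)])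
      _ = (f 0 - f (n - 1)) * B := by
          rw [← Finset.sum_mul, Finset.sum_range_sub' f]
  have h1 : |f (n - 1) * ∑ i ∈ Finset.range n, c i| ≤ f (n - 1) * B := by
    rw [abs_mul, abs_of_nonneg (hf0 _)]
    exact mul_le_mul_of_nonneg_left (hB n le_rfl) (hf0 _)
  have hf0n : f (n - 1) ≤ f 0 := hf (Nat.zero_le _)
  calc |f (n - 1) * (∑ i ∈ Finset.range n, c i)
        - ∑ i ∈ Finset.range (n - 1), (f (i + 1) - f i) * ∑ j ∈ Finset.range (i + 1), c j|
      ≤ f (n - 1) * B + (f 0 - f (n - 1)) * B := by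
        refine (abs_sub _ _).trans ?_
        exact add_le_add h1 hT
    _ = f 0 * B := by ring
    _ ≤ B := by nlinarith

lemma riemann_antitone (f : ℝ → ℝ) (hc : Continuous f) (ha : Antitone f)
    (h0 : ∀ s, 0 ≤ f s) (h1 : ∀ s, f s ≤ 1) (δ : ℝ) (hδ : 0 < δ) (N : ℕ) :
    |(∑ i ∈ Finset.range (N + 1), f (i * δ) * δ) - ∫ s in (0:ℝ)..(((N:ℝ) + 1) * δ), f s| ≤ δ := by
  have hint : ∀ u v : ℝ, IntervalIntegrable f volume u v := fun u v =>
    hc.intervalIntegrable u v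
  have hadj : ∀ n : ℕ, ∑ k ∈ Finset.range n, ∫ x in ((k:ℝ) * δ)..(((k:ℝ) + 1) * δ), f x
      = ∫ x in (0:ℝ)..((n:ℝ) * δ), f x := by
    intro n
    have := intervalIntegral.sum_integral_adjacent_intervals (μ := volume) (f := f)
      (a := fun k : ℕ => (k : ℝ) * δ) (n := n) (fun k _ => hint _ _)
    simpa using this
  have hup : ∀ i : ℕ, ∫ x in ((i:ℝ) * δ)..(((i:ℝ) + 1) * δ), f x ≤ f ((i:ℝ) * δ) * δ := by
    intro i
    have hle : (i:ℝ) * δ ≤ ((i:ℝ) + 1) * δ := by nlinarith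
    calc ∫ x in ((i:ℝ) * δ)..(((i:ℝ) + 1) * δ), f x
        ≤ ∫ _x in ((i:ℝ) * δ)..(((i:ℝ) + 1) * δ), f ((i:ℝ) * δ) :=
          intervalIntegral.integral_mono_on hle (hint _ _) intervalIntegrable_const
            (fun x hx => ha hx.1)
      _ = f ((i:ℝ) * δ) * δ := by rw [intervalIntegral.integral_const, smul_eq_mul]; ring
  have hdown : ∀ i : ℕ, f (((i:ℝ) + 1) * δ) * δ ≤ ∫ x in ((i:ℝ) * δ)..(((i:ℝ) + 1) * δ), f x := by
    intro i
    have hle : (i:ℝ) * δ ≤ ((i:ℝ) + 1) * δ := by nlinarith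
    calc f (((i:ℝ) + 1) * δ) * δ
        = ∫ _x in ((i:ℝ) * δ)..(((i:ℝ) + 1) * δ), f (((i:ℝ) + 1) * δ) := by
          rw [intervalIntegral.integral_const]; rw [smul_eq_mul]; ring
      _ ≤ ∫ x in ((i:ℝ) * δ)..(((i:ℝ) + 1) * δ), f x :=
          intervalIntegral.integral_mono_on hle intervalIntegrable_const (hint _ _)
            (fun x hx => ha hx.2)
  -- lower bound for the sum
  have hlow : ∫ s in (0:ℝ)..(((N:ℝ) + 1) * δ), f s ≤ ∑ i ∈ Finset.range (N + 1), f (i * δ) * δ := by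
    have := hadj (N + 1)
    push_cast at this
    rw [← this]
    exact Finset.sum_le_sum fun i _ => hup i
  -- upper bound
  have hupper : ∑ i ∈ Finset.range (N + 1), f (i * δ) * δ
      ≤ (∫ s in (0:ℝ)..(((N:ℝ) + 1) * δ), f s) + δ := by
    have hsplit : (∫ s in (0:ℝ)..((N:ℝ) * δ), f s) + ∫ s in ((N:ℝ) * δ)..(((N:ℝ) + 1) * δ), f s
        = ∫ s in (0:ℝ)..(((N:ℝ) + 1) * δ), f s :=
      intervalIntegral.integral_add_adjacent_intervals (hint _ _) (hint _ _)
    have hnn : 0 ≤ ∫ s in ((N:ℝ) * δ)..(((N:ℝ) + 1) * δ), f s :=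
      intervalIntegral.integral_nonneg (by nlinarith) (fun x _ => h0 x)
    have hrw : ∑ i ∈ Finset.range (N + 1), f ((i:ℝ) * δ) * δ
        = (∑ i ∈ Finset.range N, f (((i:ℝ) + 1) * δ) * δ) + f ((0:ℝ) * δ) * δ := by
      rw [Finset.sum_range_succ' (fun i => f ((i:ℝ) * δ) * δ) N]
      push_cast
      rfl
    rw [hrw]
    have h2 : ∑ i ∈ Finset.range N, f (((i:ℝ) + 1) * δ) * δ ≤ ∫ s in (0:ℝ)..((N:ℝ) * δ), f s := by
      rw [← hadj N]
      exact Finset.sum_le_sum fun i _ => hdown i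
    have h3 : f ((0:ℝ) * δ) * δ ≤ δ := by
      have := h1 ((0:ℝ) * δ); nlinarith
    linarith
  rw [abs_le]
  constructor <;> linarith

set_option maxHeartbeats 1000000 in
/-- Weighted Riemann-sum convergence: if `g` has Cesàro mean `1` and `F` is a
continuous nondecreasing `[0,1]`-valued function, then
`(1/√t) ∑_{0 ≤ x ≤ M√t} g(x) F(−x/√t) → ∫_0^M F(−s) ds`. -/
theorem weighted_riemann_sum_limit
    (g : ℤ → ℝ) (hgpos : ∀ x : ℤ, 0 < g x)
    (hgmean : Tendsto (fun n : ℕ => (∑ x ∈ Finset.Icc (0 : ℤ) ((n : ℤ) - 1), g x) / (n : ℝ))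
      atTop (nhds 1))
    (F : ℝ → ℝ) (hFcont : Continuous F) (hFmono : Monotone F)
    (hF01 : ∀ s, 0 ≤ F s ∧ F s ≤ 1) :
    ∀ M : ℝ, 0 < M →
      Tendsto
        (fun t : ℝ =>
          (∑ x ∈ Finset.Icc (0 : ℤ) ⌊M * Real.sqrt t⌋,
              g x * F (-(x : ℝ) / Real.sqrt t)) / Real.sqrt t)
        atTop (nhds (∫ s in (0 : ℝ)..M, F (-s))) := by
  intro M hM
  set fc : ℝ → ℝ := fun s => F (-s) with hfc
  have hfc_cont : Continuous fc := hFcont.comp continuous_neg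
  have hfc_anti : Antitone fc := fun a b hab => hFmono (neg_le_neg hab)
  have hfc0 : ∀ s, 0 ≤ fc s := fun s => (hF01 (-s)).1
  have hfc1 : ∀ s, fc s ≤ 1 := fun s => (hF01 (-s)).2
  have hint : ∀ u v : ℝ, IntervalIntegrable fc volume u v := fun u v =>
    hfc_cont.intervalIntegrable u v
  set G : ℕ → ℝ := fun n => ∑ i ∈ Finset.range n, g (i : ℤ) with hG
  have hGmean : Tendsto (fun n : ℕ => G n / (n : ℝ)) atTop (nhds 1) := by
    refine hgmean.congr fun n => ?_
    congr 1
    cases n with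
    | zero => simp [hG]
    | succ m =>
        have h1 : ((m + 1 : ℕ) : ℤ) - 1 = (m : ℤ) := by push_cast; ring
        rw [h1, sum_Icc_int_eq g m]
  rw [Metric.tendsto_atTop]
  intro ε hε
  set ε' : ℝ := ε / (4 * (M + 1)) with hε'def
  have hε' : 0 < ε' := by positivity
  obtain ⟨n₀, hn₀⟩ := (Metric.tendsto_atTop.mp hGmean) ε' hε'
  set n₁ : ℕ := max n₀ 1 with hn₁
  set C : ℝ := ∑ k ∈ Finset.range (n₁ + 1), |G k - (k : ℝ)| with hCdef
  have hC0 : 0 ≤ C := Finset.sum_nonneg fun k _ => abs_nonneg _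
  have hD : ∀ k : ℕ, |G k - (k : ℝ)| ≤ C + ε' * k := by
    intro k
    rcases le_or_gt k n₁ with hk | hk
    · have h1 : |G k - (k : ℝ)| ≤ C :=
        Finset.single_le_sum (f := fun j => |G j - (j : ℝ)|) (fun i _ => abs_nonneg _)
          (Finset.mem_range.mpr (by omega))
      have h2 : 0 ≤ ε' * k := by positivity
      linarith
    · have h1 : |G k / k - 1| < ε' := by
        have := hn₀ k (le_trans (le_max_left _ _) hk.le)
        rwa [Real.dist_eq] at this
      have hkpos : (0:ℝ) < k := by
        have : 1 ≤ k := le_trans (le_max_right n₀ 1) hk.le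
        exact_mod_cast Nat.lt_of_lt_of_le Nat.zero_lt_one this
      have h2 : G k - (k : ℝ) = k * (G k / k - 1) := by field_simp
      rw [h2, abs_mul, abs_of_pos hkpos]
      nlinarith [abs_nonneg (G k / (k:ℝ) - 1)]
  set R : ℝ := max 1 (4 * (C + 2) / ε) with hR
  have hR1 : 1 ≤ R := le_max_left _ _
  have hR0 : 0 ≤ R := by linarith
  refine ⟨R ^ 2, fun t ht => ?_⟩
  set r : ℝ := Real.sqrt t with hr
  have hrR : R ≤ r := by
    rw [hr, ← Real.sqrt_sq hR0]
    exact Real.sqrt_le_sqrt ht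
  have hr1 : 1 ≤ r := le_trans hR1 hrR
  have hr0 : 0 < r := lt_of_lt_of_le one_pos hr1
  have hrε : 4 * (C + 2) / ε ≤ r := le_trans (le_max_right _ _) hrR
  -- the integer cutoff
  set N : ℕ := (⌊M * r⌋).toNat with hN
  have hMr : 0 < M * r := mul_pos hM hr0
  have hNcast : ((N : ℤ) : ℝ) = ((⌊M * r⌋ : ℤ) : ℝ) := by
    rw [hN, Int.toNat_of_nonneg (Int.floor_nonneg.mpr hMr.le)]
  have hNle : (N : ℝ) ≤ M * r := by
    have h := Int.floor_le (M * r)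
    calc (N : ℝ) = ((⌊M * r⌋ : ℤ) : ℝ) := by exact_mod_cast hNcast
      _ ≤ M * r := h
  have hNgt : M * r < (N : ℝ) + 1 := by
    have h := Int.lt_floor_add_one (M * r)
    calc M * r < ((⌊M * r⌋ : ℤ) : ℝ) + 1 := h
      _ = (N : ℝ) + 1 := by rw [← hNcast]; norm_cast
  -- rewrite the sum
  have hfloorN : ⌊M * r⌋ = (N : ℤ) := (Int.toNat_of_nonneg (Int.floor_nonneg.mpr hMr.le)).symm
  have hsum_eq : (∑ x ∈ Finset.Icc (0 : ℤ) ⌊M * Real.sqrt t⌋, g x * F (-(x : ℝ) / Real.sqrt t))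
      = ∑ i ∈ Finset.range (N + 1), g (i : ℤ) * fc ((i : ℝ) * (1 / r)) := by
    rw [← hr, hfloorN, sum_Icc_int_eq (fun x => g x * F (-(x : ℝ) / r)) N]
    refine Finset.sum_congr rfl fun i _ => ?_
    have : -(((i : ℤ) : ℝ)) / r = -((i : ℝ) * (1 / r)) := by push_cast; ring
    rw [this]
  -- Abel bound
  set fn : ℕ → ℝ := fun i => fc ((i : ℝ) * (1 / r)) with hfn
  have hfn_anti : Antitone fn := by
    intro i j hij
    exact hfc_anti (by
      have : (i : ℝ) ≤ (j : ℝ) := by exact_mod_cast hij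
      have h1r : 0 ≤ 1 / r := by positivity
      nlinarith)
  have hfn0 : ∀ i, 0 ≤ fn i := fun i => hfc0 _
  have hfn1 : fn 0 ≤ 1 := hfc1 _
  have hBk : ∀ k ≤ N + 1, |∑ i ∈ Finset.range k, (g (i : ℤ) - 1)| ≤ C + ε' * (N + 1) := by
    intro k hk
    have h1 : ∑ i ∈ Finset.range k, (g (i : ℤ) - 1) = G k - (k : ℝ) := by
      rw [Finset.sum_sub_distrib, Finset.sum_const, card_range]
      simp [hG]
    rw [h1]
    have h2 := hD k
    have h3 : ε' * (k : ℝ) ≤ ε' * ((N : ℝ) + 1) := by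
      have : (k : ℝ) ≤ (N : ℝ) + 1 := by exact_mod_cast hk
      nlinarith
    push_cast
    linarith
  have habel : |∑ i ∈ Finset.range (N + 1), (g (i : ℤ) - 1) * fn i| ≤ C + ε' * (N + 1) :=
    abel_bound (fun i => g (i : ℤ) - 1) fn (N + 1) hfn_anti hfn0 hfn1 hBk
  -- Riemann bound
  have hriem := riemann_antitone fc hfc_cont hfc_anti hfc0 hfc1 (1 / r) (by positivity) N
  -- integral tail bound
  set b : ℝ := ((N : ℝ) + 1) * (1 / r) with hb
  have hMb : M ≤ b := by
    have h1 : M * r * (1 / r) ≤ ((N : ℝ) + 1) * (1 / r) :=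
      mul_le_mul_of_nonneg_right hNgt.le (by positivity)
    have h2 : M * r * (1 / r) = M := by field_simp
    rw [hb]; linarith
  have hbM : b - M ≤ 1 / r := by
    have h1 : ((N : ℝ) + 1) * (1 / r) ≤ (M * r + 1) * (1 / r) :=
      mul_le_mul_of_nonneg_right (by linarith) (by positivity)
    have h3 : (M * r + 1) * (1 / r) = M + 1 / r := by field_simp
    rw [hb]; linarith
  have htail : |(∫ s in (0:ℝ)..b, fc s) - ∫ s in (0:ℝ)..M, fc s| ≤ 1 / r := by
    have hsplit : (∫ s in (0:ℝ)..M, fc s) + ∫ s in M..b, fc s = ∫ s in (0:ℝ)..b, fc s :=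
      intervalIntegral.integral_add_adjacent_intervals (hint _ _) (hint _ _)
    have hnn : 0 ≤ ∫ s in M..b, fc s :=
      intervalIntegral.integral_nonneg hMb (fun x _ => hfc0 x)
    have hup : (∫ s in M..b, fc s) ≤ b - M := by
      calc (∫ s in M..b, fc s) ≤ ∫ _s in M..b, (1:ℝ) :=
            intervalIntegral.integral_mono_on hMb (hint _ _) intervalIntegrable_const
              (fun x _ => hfc1 x)
        _ = b - M := by rw [intervalIntegral.integral_const, smul_eq_mul, mul_one]
    rw [abs_le]
    constructor <;> linarith
  -- assemble
  rw [Real.dist_eq, hsum_eq]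
  have hdecomp : (∑ i ∈ Finset.range (N + 1), g (i : ℤ) * fn i)
      = (∑ i ∈ Finset.range (N + 1), (g (i : ℤ) - 1) * fn i)
        + ∑ i ∈ Finset.range (N + 1), fn i := by
    rw [← Finset.sum_add_distrib]
    exact Finset.sum_congr rfl fun i _ => by ring
  have hTsum : (∑ i ∈ Finset.range (N + 1), fn i) / r
      = ∑ i ∈ Finset.range (N + 1), fc ((i : ℝ) * (1 / r)) * (1 / r) := by
    simp only [hfn]
    rw [← Finset.sum_mul, one_div, div_eq_mul_inv]
  have hIeq : (∫ s in (0 : ℝ)..M, F (-s)) = ∫ s in (0:ℝ)..M, fc s := rfl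
  have key : |(∑ i ∈ Finset.range (N + 1), g (i : ℤ) * fn i) / r - ∫ s in (0:ℝ)..M, fc s|
      ≤ (C + ε' * (N + 1)) / r + 1 / r + 1 / r := by
    have e1 : (∑ i ∈ Finset.range (N + 1), g (i : ℤ) * fn i) / r - ∫ s in (0:ℝ)..M, fc s
        = ((∑ i ∈ Finset.range (N + 1), (g (i : ℤ) - 1) * fn i) / r)
          + ((∑ i ∈ Finset.range (N + 1), fc ((i : ℝ) * (1 / r)) * (1 / r))
              - ∫ s in (0:ℝ)..b, fc s)
          + ((∫ s in (0:ℝ)..b, fc s) - ∫ s in (0:ℝ)..M, fc s) := by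
      rw [hdecomp, add_div, hTsum]; ring
    rw [e1]
    have t1 : |(∑ i ∈ Finset.range (N + 1), (g (i : ℤ) - 1) * fn i) / r|
        ≤ (C + ε' * (N + 1)) / r := by
      rw [abs_div, abs_of_pos hr0]
      exact (div_le_div_iff_of_pos_right hr0).mpr habel
    calc |(∑ i ∈ Finset.range (N + 1), (g (i : ℤ) - 1) * fn i) / r
          + ((∑ i ∈ Finset.range (N + 1), fc ((i : ℝ) * (1 / r)) * (1 / r))
              - ∫ s in (0:ℝ)..b, fc s)
          + ((∫ s in (0:ℝ)..b, fc s) - ∫ s in (0:ℝ)..M, fc s)|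
        ≤ |(∑ i ∈ Finset.range (N + 1), (g (i : ℤ) - 1) * fn i) / r|
          + |(∑ i ∈ Finset.range (N + 1), fc ((i : ℝ) * (1 / r)) * (1 / r))
              - ∫ s in (0:ℝ)..b, fc s|
          + |(∫ s in (0:ℝ)..b, fc s) - ∫ s in (0:ℝ)..M, fc s| := by
          exact (abs_add_le _ _).trans (add_le_add_left (abs_add_le _ _) _)
      _ ≤ (C + ε' * (N + 1)) / r + 1 / r + 1 / r := add_le_add (add_le_add t1 hriem) htail
  -- final numeric estimate
  have hN1 : (N : ℝ) + 1 ≤ (M + 1) * r := by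
    have e : (M + 1) * r = M * r + r := by ring
    linarith
  have hM1 : M + 1 ≠ 0 := by positivity
  have hterm1 : ε' * ((N : ℝ) + 1) / r ≤ ε / 4 := by
    have h1 : ε' * ((N : ℝ) + 1) ≤ ε' * ((M + 1) * r) := by nlinarith
    have h2 : ε' * ((M + 1) * r) / r = ε' * (M + 1) := by
      field_simp
    have h3 : ε' * (M + 1) = ε / 4 := by rw [hε'def]; field_simp
    calc ε' * ((N : ℝ) + 1) / r ≤ ε' * ((M + 1) * r) / r := (div_le_div_iff_of_pos_right hr0).mpr h1
      _ = ε / 4 := by rw [h2, h3]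
  have hterm2 : (C + 2) / r ≤ ε / 4 := by
    rw [div_le_iff₀ hr0]
    have h1 : ε / 4 * (4 * (C + 2) / ε) = C + 2 := by field_simp
    nlinarith [mul_le_mul_of_nonneg_left hrε (show (0:ℝ) ≤ ε / 4 by linarith)]
  have hbound : (C + ε' * ((N : ℝ) + 1)) / r + 1 / r + 1 / r ≤ ε / 2 := by
    have e2 : (C + ε' * ((N : ℝ) + 1)) / r + 1 / r + 1 / r
        = (C + 2) / r + ε' * ((N : ℝ) + 1) / r := by ring
    rw [e2]; linarith
  simp only [hfn] at key
  calc |(∑ i ∈ Finset.range (N + 1), g (i : ℤ) * fc ((i : ℝ) * (1 / r))) / r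
        - ∫ s in (0:ℝ)..M, fc s|
      ≤ (C + ε' * ((N : ℝ) + 1)) / r + 1 / r + 1 / r := key
    _ ≤ ε / 2 := hbound
    _ < ε := by linarith
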